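/- If σ is strongly erasing and verifies the optimality condition, then for every finite binary word w there exists h ∈ ℕ such that f_σ^h([w]) = [0,1], where [w] is the cylinder of points whose expansion begins with w; consequently f_σ is topologically mixing. -/

import Mathlib

/-- Apply a `k`-block substitution blockwise to a finite word, dropping the
trailing partial block (the paper's truncation convention). -/
def blockApply (k : Nat) (sigma : List Bool -> List Bool) (w : List Bool) : List Bool :=
  if h : 0 < k && k <= w.length then
    sigma (w.take k) ++ blockApply k sigma (w.drop k)
  else []
termination_by w.length
decreasing_by
  simp only [Bool.and_eq_true, decide_eq_true_eq] at h
  simp [List.length_drop]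
  omega

/-- The length-`m` prefix of an infinite binary word. -/
def prefixOf (u : Nat -> Bool) (m : Nat) : List Bool := List.ofFn fun i : Fin m => u i

/-- Concatenation of the first `m` words of a sequence of finite words. -/
def concatPre (v : Nat -> List Bool) (m : Nat) : List Bool :=
  (List.ofFn fun i : Fin m => v i).flatten

/-- The optimality condition: every infinite binary word is an infinite
concatenation of nonempty images of length-`k` blocks under `sigma`. -/
def OC (k : Nat) (sigma : List Bool -> List Bool) : Prop :=
  ∀ w : Nat -> Bool, ∃ u : Nat -> List Bool,
    (∀ i, (u i).length = k ∧ sigma (u i) ≠ []) ∧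
    ∀ m, concatPre (fun i => sigma (u i)) m
        = prefixOf w (concatPre (fun i => sigma (u i)) m).length

/-- Value of a finite binary word read as binary digits after the point. -/
noncomputable def valFin (w : List Bool) : ℝ :=
  (w.zipIdx.map fun p => if p.1 then ((2:ℝ))⁻¹ ^ (p.2 + 1) else 0).sum

/-- Value of an infinite binary word read as binary digits after the point. -/
noncomputable def valInf (u : Nat -> Bool) : ℝ :=
  ∑' i : Nat, if u i then ((2:ℝ))⁻¹ ^ (i + 1) else 0

/-- A word is not eventually zero (it has infinitely many ones). -/
def NEZ (u : Nat -> Bool) : Prop := ∀ n, ∃ m, n ≤ m ∧ u m = true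

open Classical in
/-- The unique binary expansion of `x ∈ (0,1]` not ending in `0^∞`
(junk value, the zero word, if no such expansion exists). -/
noncomputable def tilde (x : ℝ) : Nat -> Bool :=
  if h : ∃ u : Nat -> Bool, NEZ u ∧ valInf u = x then h.choose else fun _ => false

open Classical in
/-- The interval map induced by the erasing `k`-block substitution `sigma`
(with erased block `weps`) acting on binary expansions: `f x = 0.sigma(x̃)`,
with value `0` at `x = 0` (no expansion not ending in `0^∞`) and when
`x̃ = weps^∞`. -/
noncomputable def fSigma (k : Nat) (sigma : List Bool -> List Bool) (weps : List Bool)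
    (x : ℝ) : ℝ :=
  if (¬ ∃ u : Nat -> Bool, NEZ u ∧ valInf u = x) ∨
     (∀ i : Nat, tilde x i = weps.getD (i % k) false) then 0
  else ⨆ n : Nat, valFin (blockApply k sigma (prefixOf (tilde x) (n * k)))

/-- The set of `k`-roundings of a finite word `w`: extensions of `w` of length
the least multiple of `k` that is `≥ |w|`. -/
def kRound (k : Nat) (w : List Bool) : Set (List Bool) :=
  {u | ∃ v : List Bool, u = w ++ v ∧ u.length = k * ((w.length + k - 1) / k)}

/-- `wIter k sigma n w` is the set `w^[n]` of the paper: `w^[0] = {w}` and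
`w^[n] = {sigma(r) : r a k-rounding of an element of w^[n-1]}`. -/
def wIter (k : Nat) (sigma : List Bool -> List Bool) : Nat -> List Bool -> Set (List Bool)
  | 0, w => {w}
  | n + 1, w => {u | ∃ p ∈ wIter k sigma n w, ∃ r ∈ kRound k p, u = blockApply k sigma r}

/-- The cylinder `[w]`: points of `[0,1]` having a binary expansion beginning
with the finite word `w`. -/
def Cyl (w : List Bool) : Set ℝ :=
  {x | ∃ u : Nat -> Bool, (∀ i < w.length, u i = w.getD i false) ∧ x = valInf u}


section Aux

open Finset

/-- The summand of `valInf`. -/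
noncomputable def E (u : Nat → Bool) (i : Nat) : ℝ := if u i then ((2:ℝ))⁻¹ ^ (i + 1) else 0

lemma E_nonneg (u : Nat → Bool) (i : Nat) : 0 ≤ E u i := by
  unfold E; split <;> positivity

lemma E_le (u : Nat → Bool) (i : Nat) : E u i ≤ ((2:ℝ))⁻¹ ^ (i + 1) := by
  unfold E; split
  · exact le_refl _
  · positivity

lemma summable_geo : Summable (fun i : Nat => ((2:ℝ))⁻¹ ^ (i + 1)) := by
  simpa [pow_succ] using (summable_geometric_two.mul_right (2:ℝ)⁻¹)

lemma tsum_geo : ∑' i : Nat, ((2:ℝ))⁻¹ ^ (i + 1) = 1 := by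
  have h := tsum_geometric_two' 1
  simpa [one_div, pow_succ, div_eq_mul_inv, mul_inv, mul_comm] using h

lemma summable_E (u : Nat → Bool) : Summable (E u) :=
  Summable.of_nonneg_of_le (E_nonneg u) (E_le u) summable_geo

lemma valInf_eq (u : Nat → Bool) : valInf u = ∑' i, E u i := rfl

lemma valInf_nonneg (u : Nat → Bool) : 0 ≤ valInf u := by
  rw [valInf_eq]
  exact tsum_nonneg (E_nonneg u)

lemma valInf_le_one (u : Nat → Bool) : valInf u ≤ 1 := by
  rw [valInf_eq, ← tsum_geo]
  exact Summable.tsum_le_tsum (E_le u) (summable_E u) summable_geo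

lemma valInf_mem_Icc (u : Nat → Bool) : valInf u ∈ Set.Icc (0:ℝ) 1 :=
  ⟨valInf_nonneg u, valInf_le_one u⟩

lemma valFin_eq_sum (w : List Bool) :
    valFin w = ∑ i ∈ Finset.range w.length,
      (if w.getD i false then ((2:ℝ))⁻¹ ^ (i + 1) else 0) := by
  unfold valFin
  rw [← List.ofFn_get (w.zipIdx.map _), List.sum_ofFn]
  rw [← Fin.sum_univ_eq_sum_range]
  have hlen : (w.zipIdx.map fun p => if p.1 then ((2:ℝ))⁻¹ ^ (p.2 + 1) else 0).length = w.length := by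
    simp
  rw [Finset.sum_bij' (fun (i : Fin _) _ => (Fin.cast hlen i : Fin w.length))
      (fun (i : Fin w.length) _ => (Fin.cast hlen.symm i))]
  · intros; simp
  · intros; simp
  · intros; simp
  · intros; simp
  · intro i _
    have hi : (i : Nat) < w.length := by rw [← hlen]; exact i.isLt
    simp only [List.get_eq_getElem, List.getElem_map, List.getElem_zipIdx]
    simp [List.getD, List.getElem?_eq_getElem hi]

@[simp] lemma length_prefixOf (u : Nat → Bool) (m : Nat) : (prefixOf u m).length = m := by
  simp [prefixOf]

lemma getD_prefixOf (u : Nat → Bool) (m i : Nat) (hi : i < m) :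
    (prefixOf u m).getD i false = u i := by
  rw [List.getD_eq_getElem]
  · simp [prefixOf]
  · simp [hi]

@[simp] lemma prefixOf_zero (u : Nat → Bool) : prefixOf u 0 = [] := rfl

lemma prefixOf_add (u : Nat → Bool) (m n : Nat) :
    prefixOf u (m + n) = prefixOf u m ++ prefixOf (fun i => u (m + i)) n := by
  unfold prefixOf
  rw [List.ofFn_add]
  congr 1

lemma valFin_prefixOf (u : Nat → Bool) (m : Nat) :
    valFin (prefixOf u m) = ∑ i ∈ Finset.range m, E u i := by
  rw [valFin_eq_sum, length_prefixOf]
  refine Finset.sum_congr rfl fun i hi => ?_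
  rw [getD_prefixOf u m i (Finset.mem_range.1 hi)]
  rfl

lemma self_eq_prefixOf (w : List Bool) :
    w = prefixOf (fun i => w.getD i false) w.length := by
  apply List.ext_getElem
  · simp
  · intro i h1 h2
    simp [prefixOf, List.getD_eq_getElem w false h1]

lemma valFin_nonneg (w : List Bool) : 0 ≤ valFin w := by
  rw [valFin_eq_sum]
  apply Finset.sum_nonneg
  intro i _
  split <;> positivity

lemma valFin_le_one (w : List Bool) : valFin w ≤ 1 := by
  conv_lhs => rw [self_eq_prefixOf w]
  rw [valFin_prefixOf]
  calc (∑ i ∈ Finset.range w.length, E (fun i => w.getD i false) i)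
      ≤ ∑' i, E (fun i => w.getD i false) i :=
        Summable.sum_le_tsum _ (fun i _ => E_nonneg _ i) (summable_E _)
    _ ≤ 1 := valInf_le_one _

lemma valFin_le_append (w c : List Bool) : valFin w ≤ valFin (w ++ c) := by
  rw [valFin_eq_sum, valFin_eq_sum, List.length_append]
  have h : ∀ i ∈ Finset.range w.length,
      (if w.getD i false then ((2:ℝ))⁻¹ ^ (i+1) else 0)
        = (if (w ++ c).getD i false then ((2:ℝ))⁻¹ ^ (i+1) else 0) := by
    intro i hi; rw [List.getD_append _ _ _ _ (Finset.mem_range.1 hi)]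
  rw [Finset.sum_congr rfl h]
  exact Finset.sum_le_sum_of_subset_of_nonneg
    (Finset.range_subset_range.2 (Nat.le_add_right _ _)) (fun i _ _ => by split <;> positivity)

lemma partial_tail (u : Nat → Bool) (n : Nat) :
    valInf u = (∑ i ∈ Finset.range n, E u i) + ∑' i, E u (i + n) :=
  (Summable.sum_add_tsum_nat_add n (summable_E u)).symm

lemma summable_E_shift (u : Nat → Bool) (n : Nat) : Summable (fun i => E u (i + n)) :=
  (summable_nat_add_iff n).2 (summable_E u)

lemma tail_nonneg (u : Nat → Bool) (n : Nat) : 0 ≤ ∑' i, E u (i + n) :=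
  tsum_nonneg fun i => E_nonneg u _

lemma tail_le (u : Nat → Bool) (n : Nat) : ∑' i, E u (i + n) ≤ ((2:ℝ))⁻¹ ^ n := by
  have h1 : ∑' i : Nat, ((2:ℝ))⁻¹ ^ (i + n + 1) = ((2:ℝ))⁻¹ ^ n := by
    have : ∀ i : Nat, ((2:ℝ))⁻¹ ^ (i + n + 1) = ((2:ℝ))⁻¹ ^ n * ((2:ℝ))⁻¹ ^ (i + 1) := by
      intro i; ring
    rw [tsum_congr this, tsum_mul_left, tsum_geo, mul_one]
  rw [← h1]
  exact Summable.tsum_le_tsum (fun i => E_le u (i + n))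
    (summable_E_shift u n) (by
      have := (summable_nat_add_iff (f := fun i : Nat => ((2:ℝ))⁻¹ ^ (i + 1)) n).2 summable_geo
      simpa using this)

lemma agree_close (u v : Nat → Bool) (n : Nat) (h : ∀ i < n, u i = v i) :
    |valInf u - valInf v| ≤ ((2:ℝ))⁻¹ ^ n := by
  rw [partial_tail u n, partial_tail v n]
  have hs : (∑ i ∈ Finset.range n, E u i) = ∑ i ∈ Finset.range n, E v i := by
    refine Finset.sum_congr rfl fun i hi => ?_
    unfold E; rw [h i (Finset.mem_range.1 hi)]
  rw [hs]
  have h1 := tail_nonneg u n; have h2 := tail_nonneg v n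
  have h3 := tail_le u n; have h4 := tail_le v n
  rw [abs_sub_le_iff]
  constructor <;> linarith

open Classical in
/-- Greedy partial sums for constructing binary expansions. -/
noncomputable def greedyS (y : ℝ) : Nat → ℝ
  | 0 => 0
  | n + 1 => greedyS y n + (if greedyS y n + ((2:ℝ))⁻¹ ^ (n + 1) ≤ y then ((2:ℝ))⁻¹ ^ (n + 1) else 0)

open Classical in
/-- Greedy binary digits. -/
noncomputable def greedyU (y : ℝ) (n : Nat) : Bool :=
  if greedyS y n + ((2:ℝ))⁻¹ ^ (n + 1) ≤ y then true else false

lemma greedyS_succ (y : ℝ) (n : Nat) :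
    greedyS y (n + 1) = greedyS y n + E (greedyU y) n := by
  rw [greedyS, E, greedyU]
  congr 1
  split <;> simp

lemma greedyS_eq_sum (y : ℝ) (n : Nat) :
    greedyS y n = ∑ i ∈ Finset.range n, E (greedyU y) i := by
  induction n with
  | zero => simp [greedyS]
  | succ n ih => rw [greedyS_succ, Finset.sum_range_succ, ih]

lemma greedy_invariant {y : ℝ} (hy : y ∈ Set.Icc (0:ℝ) 1) (n : Nat) :
    greedyS y n ≤ y ∧ y ≤ greedyS y n + ((2:ℝ))⁻¹ ^ n := by
  induction n with
  | zero => simpa [greedyS] using ⟨hy.1, hy.2⟩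
  | succ n ih =>
    rw [greedyS]
    split
    · constructor
      · assumption
      · have : ((2:ℝ))⁻¹ ^ n = ((2:ℝ))⁻¹ ^ (n + 1) + ((2:ℝ))⁻¹ ^ (n + 1) := by ring
        nlinarith [ih.2]
    · next hcond =>
      push_neg at hcond
      exact ⟨by simpa using ih.1, by simpa using hcond.le⟩

/-- Existence of a binary expansion for every `y ∈ [0,1]`. -/
lemma exists_expansion {y : ℝ} (hy : y ∈ Set.Icc (0:ℝ) 1) :
    ∃ u : Nat → Bool, valInf u = y := by
  refine ⟨greedyU y, ?_⟩
  have h1 : Filter.Tendsto (fun n => ∑ i ∈ Finset.range n, E (greedyU y) i)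
      Filter.atTop (nhds (valInf (greedyU y))) :=
    (summable_E (greedyU y)).hasSum.tendsto_sum_nat
  have h2 : Filter.Tendsto (fun n => ∑ i ∈ Finset.range n, E (greedyU y) i)
      Filter.atTop (nhds y) := by
    have hb : ∀ n, ‖(∑ i ∈ Finset.range n, E (greedyU y) i) - y‖ ≤ ((2:ℝ))⁻¹ ^ n := by
      intro n
      have h3 := greedy_invariant hy n
      rw [← greedyS_eq_sum, Real.norm_eq_abs, abs_sub_le_iff]
      constructor <;> [linarith [h3.1]; linarith [h3.2]]
    have hgeo : Filter.Tendsto (fun n : Nat => ((2:ℝ))⁻¹ ^ n) Filter.atTop (nhds 0) := by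
      apply tendsto_pow_atTop_nhds_zero_of_lt_one <;> norm_num
    have := squeeze_zero_norm hb hgeo
    have h4 : Filter.Tendsto (fun n => ((∑ i ∈ Finset.range n, E (greedyU y) i) - y) + y)
        Filter.atTop (nhds (0 + y)) := this.add tendsto_const_nhds
    simpa using h4
  exact tendsto_nhds_unique h1 h2

/-- Strict monotonicity lemma for uniqueness. -/
lemma valInf_lt_of_lex (u v : Nat → Bool) (n : Nat) (h : ∀ i < n, u i = v i)
    (hu : u n = true) (hv : v n = false) (hNEZ : NEZ u) :
    valInf v < valInf u := by
  obtain ⟨m, hm1, hm2⟩ := hNEZ (n + 1)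
  have htailu : ((2:ℝ))⁻¹ ^ (m + 1) ≤ ∑' i, E u (i + (n + 1)) := by
    have := Summable.le_tsum (summable_E_shift u (n + 1)) (m - (n + 1))
      (fun j _ => E_nonneg u _)
    have heq : E u ((m - (n + 1)) + (n + 1)) = ((2:ℝ))⁻¹ ^ (m + 1) := by
      rw [Nat.sub_add_cancel hm1, E, hm2, if_pos rfl]
    rwa [heq] at this
  have hsum : (∑ i ∈ Finset.range (n + 1), E u i)
      = (∑ i ∈ Finset.range n, E v i) + ((2:ℝ))⁻¹ ^ (n + 1) := by
    rw [Finset.sum_range_succ]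
    congr 1
    · refine Finset.sum_congr rfl fun i hi => ?_
      unfold E; rw [h i (Finset.mem_range.1 hi)]
    · rw [E, hu, if_pos rfl]
  have hsumv : (∑ i ∈ Finset.range (n + 1), E v i) = ∑ i ∈ Finset.range n, E v i := by
    rw [Finset.sum_range_succ, E, hv]
    simp
  have h5 := tail_le v (n + 1)
  have h6 : (0:ℝ) < ((2:ℝ))⁻¹ ^ (m + 1) := by positivity
  rw [partial_tail u (n + 1), partial_tail v (n + 1), hsum, hsumv]
  linarith

lemma NEZ_unique {u v : Nat → Bool} (hu : NEZ u) (hv : NEZ v)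
    (h : valInf u = valInf v) : u = v := by
  by_contra hne
  have hex : ∃ n, u n ≠ v n := by
    by_contra hall
    push_neg at hall
    exact hne (funext hall)
  classical
  let n := Nat.find hex
  have hn : u n ≠ v n := Nat.find_spec hex
  have hlt : ∀ i < n, u i = v i := fun i hi => by
    by_contra hne2
    exact Nat.find_min hex hi hne2
  cases h1 : u n <;> cases h2 : v n
  · rw [h1, h2] at hn; exact hn rfl
  · exact absurd h (ne_of_lt (valInf_lt_of_lex v u n (fun i hi => (hlt i hi).symm) h2 h1 hv))
  · exact absurd h (ne_of_gt (valInf_lt_of_lex u v n hlt h1 h2 hu))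
  · rw [h1, h2] at hn; exact hn rfl


lemma tilde_valInf {X : Nat → Bool} (h : NEZ X) : tilde (valInf X) = X := by
  rw [tilde]
  have hex : ∃ u : Nat → Bool, NEZ u ∧ valInf u = valInf X := ⟨X, h, rfl⟩
  rw [dif_pos hex]
  exact NEZ_unique hex.choose_spec.1 h hex.choose_spec.2


lemma blockApply_nil (k : Nat) (sigma : List Bool → List Bool) :
    blockApply k sigma [] = [] := by
  rw [blockApply, dif_neg]
  simp only [Bool.and_eq_true, decide_eq_true_eq, List.length_nil]
  omega

lemma blockApply_cons (k : Nat) (sigma : List Bool → List Bool) (hk : 0 < k)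
    (c b : List Bool) (hc : c.length = k) :
    blockApply k sigma (c ++ b) = sigma c ++ blockApply k sigma b := by
  rw [blockApply]
  have hcond : (0 < k && k ≤ (c ++ b).length) = true := by
    simp [List.length_append, hc, hk]
  rw [dif_pos hcond]
  congr 1
  · congr 1
    rw [← hc, List.take_left]
  · congr 1
    rw [← hc, List.drop_left]

lemma blockApply_block (k : Nat) (sigma : List Bool → List Bool) (hk : 0 < k)
    (c : List Bool) (hc : c.length = k) :
    blockApply k sigma c = sigma c := by
  have := blockApply_cons k sigma hk c [] hc
  simpa [blockApply_nil] using this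

lemma blockApply_append (k : Nat) (sigma : List Bool → List Bool) (hk : 0 < k) :
    ∀ (n : Nat) (a b : List Bool), a.length = n * k →
      blockApply k sigma (a ++ b) = blockApply k sigma a ++ blockApply k sigma b := by
  intro n
  induction n with
  | zero =>
    intro a b ha
    have : a = [] := List.eq_nil_of_length_eq_zero (by simpa using ha)
    simp [this, blockApply_nil]
  | succ n ih =>
    intro a b ha
    have hk' : k ≤ a.length := by rw [ha]; nlinarith
    have hdec : a = a.take k ++ a.drop k := (List.take_append_drop k a).symm
    have htlen : (a.take k).length = k := by rw [List.length_take]; omega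
    have hdlen : (a.drop k).length = n * k := by rw [List.length_drop, ha]; ring_nf; omega
    rw [hdec, List.append_assoc, blockApply_cons k sigma hk _ _ htlen,
      blockApply_cons k sigma hk _ _ htlen, ih _ b hdlen, List.append_assoc]

lemma nil_mem_kRound (k : Nat) (hk : 0 < k) : [] ∈ kRound k [] := by
  refine ⟨[], rfl, ?_⟩
  have h0 : (([] : List Bool).length + k - 1) / k = 0 := Nat.div_eq_of_lt (by simp; omega)
  rw [h0, Nat.mul_zero]
  simp

lemma kRound_spec {k : Nat} {p r : List Bool} (h : r ∈ kRound k p) (hk : 0 < k) :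
    (∃ v, r = p ++ v) ∧ p.length ≤ r.length ∧ r.length = k * ((p.length + k - 1) / k) := by
  obtain ⟨v, hv, hlen⟩ := h
  refine ⟨⟨v, hv⟩, ?_, hlen⟩
  rw [hlen]
  have h1 := Nat.div_add_mod (p.length + k - 1) k
  have h2 := Nat.mod_lt (p.length + k - 1) hk
  omega

lemma wIter_succ_iff (k : Nat) (sigma : List Bool → List Bool) :
    ∀ (n : Nat) (p u : List Bool),
      u ∈ wIter k sigma (n + 1) p ↔
        ∃ r ∈ kRound k p, u ∈ wIter k sigma n (blockApply k sigma r) := by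
  intro n
  induction n with
  | zero =>
    intro p u
    constructor
    · rintro ⟨q, hq, r, hr, rfl⟩
      rw [wIter] at hq
      rw [Set.mem_singleton_iff] at hq
      subst hq
      exact ⟨r, hr, rfl⟩
    · rintro ⟨r, hr, hu⟩
      rw [wIter] at hu
      rw [Set.mem_singleton_iff] at hu
      exact ⟨p, rfl, r, hr, hu⟩
  | succ n ih =>
    intro p u
    constructor
    · rintro ⟨q, hq, r', hr', rfl⟩
      rw [ih p q] at hq
      obtain ⟨r, hr, hq2⟩ := hq
      exact ⟨r, hr, q, hq2, r', hr', rfl⟩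
    · rintro ⟨r, hr, q, hq, r', hr', rfl⟩
      refine ⟨q, ?_, r', hr', rfl⟩
      rw [ih p q]
      exact ⟨r, hr, hq⟩

lemma nil_mem_wIter_succ {k : Nat} {sigma : List Bool → List Bool} {n : Nat} {w : List Bool}
    (hk : 0 < k) (h : [] ∈ wIter k sigma n w) : [] ∈ wIter k sigma (n + 1) w :=
  ⟨[], h, [], nil_mem_kRound k hk, (blockApply_nil k sigma).symm⟩


/-- Append a finite word in front of an infinite word. -/
def appendInf (a : List Bool) (u : Nat → Bool) : Nat → Bool :=
  fun i => if i < a.length then a.getD i false else u (i - a.length)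

lemma prefixOf_appendInf (a : List Bool) (u : Nat → Bool) (n : Nat) :
    prefixOf (appendInf a u) (a.length + n) = a ++ prefixOf u n := by
  apply List.ext_getElem
  · simp [prefixOf]
  · intro i h1 h2
    simp only [prefixOf, List.getElem_ofFn]
    by_cases hi : i < a.length
    · rw [List.getElem_append_left hi]
      simp [appendInf, hi, List.getD_eq_getElem a false hi]
    · rw [List.getElem_append_right (le_of_not_gt hi)]
      simp only [appendInf, hi, if_false]
      simp [prefixOf]

lemma appendInf_lt (a : List Bool) (u : Nat → Bool) (i : Nat) (hi : i < a.length) :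
    appendInf a u i = a.getD i false := if_pos hi

lemma appendInf_ge (a : List Bool) (u : Nat → Bool) (j : Nat) :
    appendInf a u (a.length + j) = u j := by
  unfold appendInf
  rw [if_neg (by omega)]
  congr 1
  omega

lemma concatPre_zero (v : Nat → List Bool) : concatPre v 0 = [] := by
  simp [concatPre]

lemma concatPre_succ (v : Nat → List Bool) (m : Nat) :
    concatPre v (m + 1) = concatPre v m ++ v m := by
  unfold concatPre
  rw [List.ofFn_succ']
  simp

lemma length_concatPre_ge (v : Nat → List Bool) (hv : ∀ i, v i ≠ []) (m : Nat) :
    m ≤ (concatPre v m).length := by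
  induction m with
  | zero => simp
  | succ m ih =>
    rw [concatPre_succ, List.length_append]
    have : 1 ≤ (v m).length := List.length_pos_iff.2 (hv m)
    omega

lemma getD_ext {K : Nat} {a b : List Bool} (ha : a.length = K) (hb : b.length = K)
    (h : ∀ j < K, a.getD j false = b.getD j false) : a = b := by
  apply List.ext_getElem (by omega)
  intro i h1 h2
  have hi : i < K := by omega
  have := h i hi
  rwa [List.getD_eq_getElem a false h1, List.getD_eq_getElem b false h2] at this

/-- The infinite word formed by concatenating a sequence of length-`k` blocks. -/
def Ufun (k : Nat) (B : Nat → List Bool) : Nat → Bool :=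
  fun i => (B (i / k)).getD (i % k) false

lemma Ufun_eval {k : Nat} (hk : 0 < k) (B : Nat → List Bool) (t j : Nat) (hj : j < k) :
    Ufun k B (t * k + j) = (B t).getD j false := by
  unfold Ufun
  rw [show t * k + j = j + t * k by ring]
  rw [Nat.add_mul_div_right _ _ hk, Nat.add_mul_mod_self_right,
    Nat.div_eq_of_lt hj, Nat.mod_eq_of_lt hj]
  simp

lemma prefixOf_Ufun_succ {k : Nat} (hk : 0 < k) (B : Nat → List Bool)
    (hB : ∀ j, (B j).length = k) (t : Nat) :
    prefixOf (Ufun k B) ((t + 1) * k) = prefixOf (Ufun k B) (t * k) ++ B t := by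
  rw [show (t + 1) * k = t * k + k by ring, prefixOf_add]
  congr 1
  apply List.ext_getElem
  · simp [hB t]
  · intro i h1 h2
    simp only [prefixOf, List.getElem_ofFn]
    have hi : i < k := by simpa using h1
    rw [Ufun_eval hk B t i hi, List.getD_eq_getElem (B t) false h2]

lemma bA_prefixOf_Ufun {k : Nat} (sigma : List Bool → List Bool) (hk : 0 < k)
    (B : Nat → List Bool) (hB : ∀ j, (B j).length = k) (t : Nat) :
    blockApply k sigma (prefixOf (Ufun k B) (t * k))
      = concatPre (fun i => sigma (B i)) t := by
  induction t with
  | zero => simp [blockApply_nil, concatPre_zero]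
  | succ t ih =>
    rw [prefixOf_Ufun_succ hk B hB t,
      blockApply_append k sigma hk t _ _ (by simp),
      blockApply_block k sigma hk _ (hB t), ih, concatPre_succ]


lemma fSigma_eval (k : Nat) (sigma : List Bool → List Bool) (weps : List Bool)
    (X : Nat → Bool) (hNEZ : NEZ X) (hne : ∃ i, X i ≠ weps.getD (i % k) false) :
    fSigma k sigma weps (valInf X)
      = ⨆ n : Nat, valFin (blockApply k sigma (prefixOf X (n * k))) := by
  have hx : tilde (valInf X) = X := tilde_valInf hNEZ
  rw [fSigma, if_neg, hx]
  rw [not_or]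
  constructor
  · exact fun hcon => hcon ⟨X, hNEZ, rfl⟩
  · rw [hx]
    push_neg
    exact hne

lemma fSigma_mem_Icc (k : Nat) (sigma : List Bool → List Bool) (weps : List Bool) (x : ℝ) :
    fSigma k sigma weps x ∈ Set.Icc (0:ℝ) 1 := by
  rw [fSigma]
  split
  · exact ⟨le_refl 0, by norm_num⟩
  · have hbdd : BddAbove (Set.range fun n : Nat =>
        valFin (blockApply k sigma (prefixOf (tilde x) (n * k)))) := by
      refine ⟨1, ?_⟩
      rintro y ⟨n, rfl⟩
      exact valFin_le_one _
    constructor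
    · have h0 := le_ciSup hbdd 0
      have : valFin (blockApply k sigma (prefixOf (tilde x) (0 * k))) = 0 := by
        norm_num [prefixOf_zero, blockApply_nil, valFin_eq_sum]
      linarith
    · exact ciSup_le fun n => valFin_le_one _

/-- The key lifting lemma: given any `k`-aligned word `r` and any infinite word `X'`
extending `blockApply r`, there is an infinite word `X` extending `r` whose value is
mapped by `fSigma` to the value of `X'`. -/
lemma fSigma_lift (k : Nat) (sigma : List Bool → List Bool) (weps : List Bool)
    (hk : 2 ≤ k) (hlen : weps.length = k)
    (herase : ∀ w : List Bool, w.length = k → (sigma w = [] ↔ w = weps))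
    (hOC : OC k sigma)
    (r : List Bool) (m0 : Nat) (hr : r.length = m0 * k)
    (X' : Nat → Bool)
    (hX' : ∀ i < (blockApply k sigma r).length,
      X' i = (blockApply k sigma r).getD i false) :
    ∃ X : Nat → Bool, (∀ i < r.length, X i = r.getD i false) ∧
      fSigma k sigma weps (valInf X) = valInf X' := by
  have hk0 : 0 < k := by omega
  set br := blockApply k sigma r with hbr
  set S : Nat → Bool := fun i => X' (br.length + i) with hS
  obtain ⟨u, hu1, hu2⟩ := hOC S
  set B : Nat → List Bool := fun j => if j % 2 = 0 then u (j / 2) else weps with hB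
  have hBlen : ∀ j, (B j).length = k := by
    intro j
    rw [hB]
    dsimp only
    split
    · exact (hu1 _).1
    · exact hlen
  have hBeven : ∀ t, B (2 * t) = u t := by
    intro t
    rw [hB]
    dsimp only
    rw [if_pos (by omega)]
    congr 1
    omega
  have hBodd : ∀ t, B (2 * t + 1) = weps := by
    intro t
    rw [hB]
    dsimp only
    rw [if_neg (by omega)]
  have hsw : sigma weps = [] := (herase weps hlen).2 rfl
  have hune : ∀ t, u t ≠ weps := by
    intro t ht
    exact (hu1 t).2 (((herase (u t) (hu1 t).1).2) ht)
  set U : Nat → Bool := Ufun k B with hU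
  set X : Nat → Bool := appendInf r U with hX
  -- X extends r
  have hext : ∀ i < r.length, X i = r.getD i false := fun i hi => appendInf_lt r U i hi
  -- X is NEZ
  have hXblock : ∀ t j, j < k → X (r.length + (t * k + j)) = (B t).getD j false := by
    intro t j hj
    rw [hX, appendInf_ge r U _, hU, Ufun_eval hk0 B t j hj]
  have hNEZ : NEZ X := by
    intro N
    by_cases hw : ∃ j, j < k ∧ weps.getD j false = true
    · obtain ⟨j, hj, hjt⟩ := hw
      refine ⟨r.length + ((2 * N + 1) * k + j), ?_, ?_⟩
      · have : N ≤ (2 * N + 1) * k := by nlinarith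
        omega
      · rw [hXblock (2 * N + 1) j hj, hBodd N, hjt]
    · push_neg at hw
      have hwf : ∀ j < k, weps.getD j false = false := by
        intro j hj
        cases hq : weps.getD j false
        · rfl
        · exact absurd hq (by simpa using hw j hj)
      have : ∃ j, j < k ∧ (u N).getD j false = true := by
        by_contra hcon
        push_neg at hcon
        apply hune N
        apply getD_ext (hu1 N).1 hlen
        intro j hj
        have h1 := hwf j hj
        cases hq : (u N).getD j false
        · rw [h1]
        · exact absurd hq (by simpa using hcon j hj)
      obtain ⟨j, hj, hjt⟩ := this
      refine ⟨r.length + (2 * N * k + j), ?_, ?_⟩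
      · have : N ≤ 2 * N * k := by nlinarith
        omega
      · rw [show 2 * N * k + j = (2 * N) * k + j by ring, hXblock (2 * N) j hj, hBeven N, hjt]
  -- X is not weps^infty
  have hnw : ∃ i, X i ≠ weps.getD (i % k) false := by
    have : u 0 ≠ weps := hune 0
    have hj : ∃ j, j < k ∧ (u 0).getD j false ≠ weps.getD j false := by
      by_contra hcon
      push_neg at hcon
      exact this (getD_ext (hu1 0).1 hlen fun j hjk => hcon j hjk)
    obtain ⟨j, hjk, hjne⟩ := hj
    refine ⟨r.length + j, ?_⟩
    have h1 : X (r.length + j) = (u 0).getD j false := by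
      have := hXblock 0 j hjk
      rw [show B 0 = u 0 from hBeven 0] at this
      simpa using this
    have h2 : (r.length + j) % k = j := by
      rw [hr, show m0 * k + j = j + m0 * k by ring, Nat.add_mul_mod_self_right,
        Nat.mod_eq_of_lt hjk]
    rw [h1, h2]
    exact hjne
  refine ⟨X, hext, ?_⟩
  rw [fSigma_eval k sigma weps X hNEZ hnw]
  set F : Nat → ℝ := fun m => valFin (blockApply k sigma (prefixOf X (m * k))) with hFdef
  have hmono : Monotone F := by
    apply monotone_nat_of_le_succ
    intro m
    rw [hFdef]
    dsimp only
    rw [show (m + 1) * k = m * k + k by ring, prefixOf_add,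
      blockApply_append k sigma hk0 m _ _ (by simp)]
    exact valFin_le_append _ _
  have hbdd : BddAbove (Set.range F) := by
    refine ⟨1, ?_⟩
    rintro y ⟨n, rfl⟩
    exact valFin_le_one _
  have h3 : Filter.Tendsto F Filter.atTop (nhds (⨆ m, F m)) := tendsto_atTop_ciSup hmono hbdd
  have hCC : ∀ t, concatPre (fun i => sigma (B i)) (2 * t)
      = concatPre (fun i => sigma (u i)) t := by
    intro t
    induction t with
    | zero => rw [Nat.mul_zero, concatPre_zero, concatPre_zero]
    | succ t ih =>
      rw [show 2 * (t + 1) = 2 * t + 1 + 1 by ring, concatPre_succ, concatPre_succ, ih,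
        concatPre_succ]
      have e1 : sigma (B (2 * t)) = sigma (u t) := by rw [hBeven t]
      have e2 : sigma (B (2 * t + 1)) = [] := by rw [hBodd t, hsw]
      rw [e1, e2, List.append_nil]
  set L : Nat → Nat := fun t => (concatPre (fun i => sigma (u i)) t).length with hLdef
  have hbrpre : prefixOf X' br.length = br := by
    apply List.ext_getElem (by simp)
    intro i h1 h2
    simp only [prefixOf, List.getElem_ofFn]
    rw [hX' i h2, List.getD_eq_getElem br false h2]
  have hsub : ∀ t, F (m0 + 2 * t) = ∑ i ∈ Finset.range (br.length + L t), E X' i := by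
    intro t
    rw [hFdef]
    dsimp only
    rw [show (m0 + 2 * t) * k = m0 * k + 2 * t * k by ring, ← hr, prefixOf_appendInf r U _,
      blockApply_append k sigma hk0 m0 r _ hr,
      show 2 * t * k = (2 * t) * k by ring,
      bA_prefixOf_Ufun sigma hk0 B hBlen (2 * t), hCC t, hu2 t]
    have heq : blockApply k sigma r
          ++ prefixOf S ((concatPre (fun i => sigma (u i)) t).length)
        = prefixOf X' (br.length + L t) := by
      rw [prefixOf_add X' br.length (L t), hbrpre, ← hS, hbr]
    rw [heq, valFin_prefixOf]
  have hLt : ∀ t, t ≤ br.length + L t := by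
    intro t
    have := length_concatPre_ge (fun i => sigma (u i)) (fun i => (hu1 i).2) t
    rw [hLdef]
    dsimp only
    omega
  have hN : Filter.Tendsto (fun t => br.length + L t) Filter.atTop Filter.atTop :=
    Filter.tendsto_atTop_mono hLt Filter.tendsto_id
  have hps : Filter.Tendsto (fun n => ∑ i ∈ Finset.range n, E X' i)
      Filter.atTop (nhds (valInf X')) := (summable_E X').hasSum.tendsto_sum_nat
  have h5 : Filter.Tendsto (fun t => F (m0 + 2 * t)) Filter.atTop (nhds (valInf X')) :=
    (hps.comp hN).congr fun t => (hsub t).symm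
  have h6 : Filter.Tendsto (fun t => F (m0 + 2 * t)) Filter.atTop (nhds (⨆ m, F m)) := by
    apply h3.comp
    exact Filter.tendsto_atTop_mono (fun t => by simp only [id_eq]; omega) Filter.tendsto_id
  exact tendsto_nhds_unique h6 h5


lemma key_induction (k : Nat) (sigma : List Bool → List Bool) (weps : List Bool)
    (hk : 2 ≤ k) (hlen : weps.length = k)
    (herase : ∀ w : List Bool, w.length = k → (sigma w = [] ↔ w = weps))
    (hOC : OC k sigma) :
    ∀ (n : Nat) (p : List Bool), [] ∈ wIter k sigma n p → ∀ y ∈ Set.Icc (0:ℝ) 1,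
      ∃ X : Nat → Bool, (∀ i < p.length, X i = p.getD i false) ∧
        (fSigma k sigma weps)^[n] (valInf X) = y := by
  intro n
  induction n with
  | zero =>
    intro p hp y hy
    rw [wIter, Set.mem_singleton_iff] at hp
    obtain ⟨u, hu⟩ := exists_expansion hy
    refine ⟨u, ?_, ?_⟩
    · intro i hi
      rw [← hp] at hi
      simp at hi
    · simpa using hu
  | succ n ih =>
    intro p hp y hy
    rw [wIter_succ_iff] at hp
    obtain ⟨r, hr, hnil⟩ := hp
    obtain ⟨X', hX'ext, hX'iter⟩ := ih (blockApply k sigma r) hnil y hy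
    obtain ⟨⟨v, hv⟩, hple, hrlen⟩ := kRound_spec hr (by omega)
    obtain ⟨X, hXext, hXval⟩ := fSigma_lift k sigma weps hk hlen herase hOC r
      ((p.length + k - 1) / k) (by rw [hrlen]; ring) X' (fun i hi => hX'ext i hi)
    refine ⟨X, ?_, ?_⟩
    · intro i hi
      rw [hXext i (by omega), hv, List.getD_append _ _ _ _ hi]
    · rw [Function.iterate_succ_apply, hXval, hX'iter]

lemma part_one (k : Nat) (sigma : List Bool → List Bool) (weps : List Bool)
    (hk : 2 ≤ k) (hlen : weps.length = k)
    (herase : ∀ w : List Bool, w.length = k → (sigma w = [] ↔ w = weps))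
    (hSE : ∀ w : List Bool, ∃ n : Nat, [] ∈ wIter k sigma n w)
    (hOC : OC k sigma) (w : List Bool) :
    ∃ h : Nat, 1 ≤ h ∧ (fSigma k sigma weps)^[h] '' Cyl w = Set.Icc 0 1 := by
  obtain ⟨n, hn⟩ := hSE w
  have hn1 : [] ∈ wIter k sigma (n + 1) w := nil_mem_wIter_succ (by omega) hn
  refine ⟨n + 1, by omega, subset_antisymm ?_ ?_⟩
  · rintro z ⟨x, _, rfl⟩
    rw [Function.iterate_succ_apply']
    exact fSigma_mem_Icc k sigma weps _
  · intro y hy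
    obtain ⟨X, hext, hiter⟩ := key_induction k sigma weps hk hlen herase hOC (n + 1) w hn1 y hy
    exact ⟨valInf X, ⟨X, hext, rfl⟩, hiter⟩

lemma Cyl_nil : Cyl [] = Set.Icc (0:ℝ) 1 := by
  apply subset_antisymm
  · rintro x ⟨u, _, rfl⟩
    exact valInf_mem_Icc u
  · intro y hy
    obtain ⟨u, hu⟩ := exists_expansion hy
    exact ⟨u, by simp, hu.symm⟩


lemma Cyl_subset_Icc (w : List Bool) : Cyl w ⊆ Set.Icc (0:ℝ) 1 := by
  rintro x ⟨u, _, rfl⟩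
  exact valInf_mem_Icc u

lemma cyl_subset_open {A : Set ℝ} (hA : IsOpen A) (hne : (A ∩ Set.Icc 0 1).Nonempty) :
    ∃ w : List Bool, Cyl w ⊆ A := by
  obtain ⟨a, haA, haI⟩ := hne
  obtain ⟨ε, hε, hball⟩ := Metric.isOpen_iff.1 hA a haA
  obtain ⟨u, hu⟩ := exists_expansion haI
  obtain ⟨m, hm⟩ : ∃ m : Nat, ((2:ℝ))⁻¹ ^ m < ε := exists_pow_lt_of_lt_one hε (by norm_num)
  refine ⟨prefixOf u m, ?_⟩
  rintro x ⟨u', hagree, rfl⟩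
  apply hball
  rw [Metric.mem_ball, Real.dist_eq]
  have hag : ∀ i < m, u' i = u i := by
    intro i hi
    have := hagree i (by simpa using hi)
    rwa [getD_prefixOf u m i hi] at this
  calc |valInf u' - a| = |valInf u' - valInf u| := by rw [hu]
    _ ≤ ((2:ℝ))⁻¹ ^ m := agree_close u' u m hag
    _ < ε := hm

lemma image_Icc (k : Nat) (sigma : List Bool → List Bool) (weps : List Bool)
    (hk : 2 ≤ k) (hlen : weps.length = k)
    (herase : ∀ w : List Bool, w.length = k → (sigma w = [] ↔ w = weps))
    (hSE : ∀ w : List Bool, ∃ n : Nat, [] ∈ wIter k sigma n w)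
    (hOC : OC k sigma) :
    ∀ m : Nat, (fSigma k sigma weps)^[m] '' Set.Icc 0 1 = Set.Icc 0 1 := by
  obtain ⟨h0, hh0, hIcc⟩ := part_one k sigma weps hk hlen herase hSE hOC []
  rw [Cyl_nil] at hIcc
  have hone : fSigma k sigma weps '' Set.Icc 0 1 = Set.Icc 0 1 := by
    apply subset_antisymm
    · rintro z ⟨x, _, rfl⟩
      exact fSigma_mem_Icc k sigma weps x
    · intro y hy
      rw [← hIcc] at hy
      obtain ⟨x, hx, hxy⟩ := hy
      obtain ⟨j, rfl⟩ : ∃ j, h0 = j + 1 := ⟨h0 - 1, by omega⟩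
      rw [Function.iterate_succ_apply'] at hxy
      refine ⟨(fSigma k sigma weps)^[j] x, ?_, hxy⟩
      cases j with
      | zero => simpa using hx
      | succ j =>
        rw [Function.iterate_succ_apply']
        exact fSigma_mem_Icc k sigma weps _
  intro m
  induction m with
  | zero => simp
  | succ m ih => rw [Function.iterate_succ', Set.image_comp, ih, hone]

end Aux

/-- if `sigma` is strongly erasing and satisfies the optimality
condition, then every cylinder is mapped onto `[0,1]` by some iterate of
`fSigma`, and consequently `fSigma` is topologically mixing on `[0,1]`. -/
theorem fSigma_mixing
    (k : Nat) (sigma : List Bool -> List Bool) (weps : List Bool)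
    (hk : 2 ≤ k) (hlen : weps.length = k)
    (hne1 : weps ≠ List.replicate k true)
    (herase : ∀ w : List Bool, w.length = k → (sigma w = [] ↔ w = weps))
    (hSE : ∀ w : List Bool, ∃ n : Nat, [] ∈ wIter k sigma n w)
    (hOC : OC k sigma) :
    (∀ w : List Bool, ∃ h : Nat,
        (fSigma k sigma weps)^[h] '' Cyl w = Set.Icc 0 1) ∧
    (∀ A B : Set ℝ, IsOpen A → IsOpen B →
      (A ∩ Set.Icc 0 1).Nonempty → (B ∩ Set.Icc 0 1).Nonempty →
      ∃ N : Nat, ∀ n ≥ N,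
        ((fSigma k sigma weps)^[n] '' (A ∩ Set.Icc 0 1) ∩ B).Nonempty) := by
  constructor
  · intro w
    obtain ⟨h, _, hh⟩ := part_one k sigma weps hk hlen herase hSE hOC w
    exact ⟨h, hh⟩
  · intro A B hA hB hAne hBne
    obtain ⟨wA, hwA⟩ := cyl_subset_open hA hAne
    obtain ⟨hA', hA'1, hA'eq⟩ := part_one k sigma weps hk hlen herase hSE hOC wA
    refine ⟨hA', fun n hn => ?_⟩
    obtain ⟨b, hbB, hbI⟩ := hBne
    have h1 : Cyl wA ⊆ A ∩ Set.Icc 0 1 := fun x hx => ⟨hwA hx, Cyl_subset_Icc wA hx⟩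
    have hsub : Set.Icc (0:ℝ) 1 ⊆ (fSigma k sigma weps)^[n] '' (A ∩ Set.Icc 0 1) := by
      calc Set.Icc (0:ℝ) 1
          = (fSigma k sigma weps)^[n - hA'] '' Set.Icc 0 1 :=
            (image_Icc k sigma weps hk hlen herase hSE hOC (n - hA')).symm
        _ = (fSigma k sigma weps)^[n - hA'] '' ((fSigma k sigma weps)^[hA'] '' Cyl wA) := by
            rw [hA'eq]
        _ = (fSigma k sigma weps)^[(n - hA') + hA'] '' Cyl wA := by
            rw [Function.iterate_add, Set.image_comp]
        _ = (fSigma k sigma weps)^[n] '' Cyl wA := by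
            rw [show n - hA' + hA' = n by omega]
        _ ⊆ (fSigma k sigma weps)^[n] '' (A ∩ Set.Icc 0 1) := Set.image_mono h1
    exact ⟨b, hsub hbI, hbB⟩
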